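/- Let C(z) = (1 − √(1−4z))/(2z) be the Catalan generating function, so C(z) = z·C(z)² + 1. For k ≥ 1 define the formal power series C₀⁽ᵏ⁾(z) by the recursion C₀⁽¹⁾(z) = 1 + 2z·C(z)·C₀⁽¹⁾(z) and, for k ≥ 2, C₀⁽ᵏ⁾(z) = Σ_{i=0}^{k} z·C₀⁽ⁱ⁾(z)·C₀⁽ᵏ⁻ⁱ⁾(z) with C₀⁽⁰⁾(z) = C(z). Then for all k ≥ 1, C₀⁽ᵏ⁾(z) = Cat(k−1)·z^{k−1}·(1−4z)^{−(2k−1)/2}. -/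

import Mathlib

open Finset

/-- Closed form for the generating functions `C₀⁽ᵏ⁾` of planar trees with `k`
labeled vertices: if `C(z) = (1−√(1−4z))/(2z)`, `C₀⁽⁰⁾ = C`,
`C₀⁽¹⁾(z) = 1 + 2z·C(z)·C₀⁽¹⁾(z)` and for `k ≥ 2`
`C₀⁽ᵏ⁾(z) = Σ_{i=0}^{k} z·C₀⁽ⁱ⁾(z)·C₀⁽ᵏ⁻ⁱ⁾(z)`, then for all `k ≥ 1`
`C₀⁽ᵏ⁾(z) = Cat(k−1)·z^{k−1}·(1−4z)^{−(2k−1)/2}` (on `0 < z < 1/4`). -/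
theorem labeled_tree_gf_closed_form (C : ℝ → ℝ) (f : ℕ → ℝ → ℝ)
    (hC : ∀ z ∈ Set.Ioo (0 : ℝ) (1 / 4), C z = (1 - Real.sqrt (1 - 4 * z)) / (2 * z))
    (hf0 : ∀ z ∈ Set.Ioo (0 : ℝ) (1 / 4), f 0 z = C z)
    (hf1 : ∀ z ∈ Set.Ioo (0 : ℝ) (1 / 4), f 1 z = 1 + 2 * z * C z * f 1 z)
    (hfk : ∀ k, 2 ≤ k → ∀ z ∈ Set.Ioo (0 : ℝ) (1 / 4),
      f k z = ∑ i ∈ Finset.range (k + 1), z * f i z * f (k - i) z) :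
    ∀ k, 1 ≤ k → ∀ z ∈ Set.Ioo (0 : ℝ) (1 / 4),
      f k z = (catalan (k - 1) : ℝ) * z ^ (k - 1) *
        (1 - 4 * z) ^ (-((2 * (k : ℝ) - 1) / 2)) := by
  intro k
  induction k using Nat.strong_induction_on with
  | _ k ih =>
  intro hk z hz
  obtain ⟨hz1, hz2⟩ := hz
  have h4 : (0:ℝ) < 1 - 4 * z := by linarith
  set s : ℝ := Real.sqrt (1 - 4 * z) with hsdef
  have hs : 0 < s := Real.sqrt_pos.2 h4
  have hs2 : s ^ 2 = 1 - 4 * z := Real.sq_sqrt h4.le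
  have h2zC : 2 * z * C z = 1 - s := by
    rw [hC z ⟨hz1, hz2⟩]
    field_simp
    rw [hsdef, mul_comm z 4]
  have htarget : ∀ m : ℕ, 1 ≤ m →
      (1 - 4 * z) ^ (-((2 * (m:ℝ) - 1) / 2)) = (s ^ (2*m - 1))⁻¹ := by
    intro m hm
    have h2m : 1 ≤ 2 * m := by omega
    have hc : ((2*m - 1 : ℕ) : ℝ) = 2*(m:ℝ) - 1 := by
      rw [Nat.cast_sub h2m]; push_cast; ring
    rw [← Real.rpow_natCast s (2*m - 1), hc, ← Real.rpow_neg hs.le, ← hs2,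
      ← Real.rpow_natCast s 2, ← Real.rpow_mul hs.le]
    congr 1
    push_cast; ring
  rcases eq_or_lt_of_le hk with h1 | hk2
  · -- k = 1
    subst h1
    have hh := hf1 z ⟨hz1, hz2⟩
    rw [h2zC] at hh
    have hsf : s * f 1 z = 1 := by linear_combination hh
    rw [htarget 1 le_rfl]
    simp only [Nat.sub_self, pow_zero, catalan_zero, Nat.cast_one, one_mul]
    norm_num
    field_simp
    linear_combination hsf
  · -- k ≥ 2
    have hk2' : 2 ≤ k := hk2
    have ihs : ∀ m, 1 ≤ m → m < k →
        f m z = (catalan (m-1) : ℝ) * z ^ (m-1) * (s ^ (2*m - 1))⁻¹ := by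
      intro m h1 h2
      rw [ih m h2 h1 z ⟨hz1, hz2⟩, htarget m h1]
    have h := hfk k hk2' z ⟨hz1, hz2⟩
    rw [Finset.sum_range_succ'] at h
    simp only [Nat.sub_zero] at h
    have hsplit : (∑ i ∈ Finset.range k, z * f (i+1) z * f (k-(i+1)) z)
        = (∑ i ∈ Finset.range (k-1), z * f (i+1) z * f (k-(i+1)) z)
          + z * f k z * f 0 z := by
      have h2 : k = (k-1) + 1 := by omega
      rw [h2, Finset.sum_range_succ, ← h2]
      simp
    rw [hsplit] at h
    have hcat : catalan (k-1) = ∑ i ∈ Finset.range (k-1), catalan i * catalan (k-2-i) := by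
      have h2 : k - 1 = (k-2) + 1 := by omega
      rw [h2, catalan_succ]
      exact Fin.sum_univ_eq_sum_range (fun i => catalan i * catalan (k - 2 - i)) (k - 2 + 1)
    have hsum : (∑ i ∈ Finset.range (k-1), z * f (i+1) z * f (k-(i+1)) z)
        = (catalan (k-1) : ℝ) * (z ^ (k-1) * (s ^ (2*k-2))⁻¹) := by
      rw [hcat]
      push_cast
      rw [Finset.sum_mul]
      refine Finset.sum_congr rfl ?_
      intro i hi
      have hi' : i < k - 1 := Finset.mem_range.1 hi
      rw [ihs (i+1) (by omega) (by omega), ihs (k-(i+1)) (by omega) (by omega)]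
      simp only [Nat.add_sub_cancel]
      rw [show 2*(i+1) - 1 = 2*i+1 by omega,
          show k - (i+1) - 1 = k - 2 - i by omega,
          show 2*(k-(i+1)) - 1 = 2*k - 2*i - 3 by omega]
      have ez : z * z^i * z^(k-2-i) = z^(k-1) := by
        rw [mul_assoc, ← pow_add, ← pow_succ']
        congr 1; omega
      have es : s^(2*i+1) * s^(2*k-2*i-3) = s^(2*k-2) := by
        rw [← pow_add]; congr 1; omega
      calc z * ((catalan i : ℝ) * z^i * (s^(2*i+1))⁻¹) *
            ((catalan (k-2-i) : ℝ) * z^(k-2-i) * (s^(2*k-2*i-3))⁻¹)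
          = (catalan i : ℝ) * (catalan (k-2-i) : ℝ) *
            ((z * z^i * z^(k-2-i)) * (s^(2*i+1) * s^(2*k-2*i-3))⁻¹) := by ring
        _ = (catalan i : ℝ) * (catalan (k-2-i) : ℝ) * (z^(k-1) * (s^(2*k-2))⁻¹) := by
            rw [ez, es]
    rw [hsum, hf0 z ⟨hz1, hz2⟩] at h
    have hsf : s * f k z = (catalan (k-1) : ℝ) * (z^(k-1) * (s^(2*k-2))⁻¹) := by
      linear_combination h + f k z * h2zC
    rw [htarget k hk]
    have hpow : s ^ (2*k - 1) = s^(2*k-2) * s := by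
      rw [← pow_succ]; congr 1; omega
    have hfin : f k z = (s * f k z) * s⁻¹ := by field_simp
    rw [hfin, hsf, hpow, mul_inv]
    ring
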